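/- Let A ∈ ℝ^{n×n} be Metzler, let B₁ ∈ ℝ^{n×m₁} and C₁ ∈ ℝ^{p₁×n} be entrywise nonnegative, and fix an entrywise nonnegative Δ ∈ ℝ^{m₁×p₁}. Then the following are equivalent: (i) there exist ξ > 0 and a strictly positive vector p ∈ ℝ^n such that p^⊤(A + B₁ΔC₁) ≤ −ξp^⊤ componentwise; (ii) the matrix A + B₁ΣC₁ is Hurwitz for every Σ ∈ ℝ^{m₁×p₁} with 0 ≤ Σ ≤ Δ componentwise. -/

import Mathlib

open Matrix
open Filter

noncomputable section

/-- A square real matrix is Metzler if all its off-diagonal entries are nonnegative. -/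
def IsMetzler {n : ℕ} (A : Matrix (Fin n) (Fin n) ℝ) : Prop :=
  ∀ i j, i ≠ j → 0 ≤ A i j

/-- A square real matrix is Hurwitz if every (complex) eigenvalue has negative real part. -/
def IsHurwitz {n : ℕ} (A : Matrix (Fin n) (Fin n) ℝ) : Prop :=
  ∀ μ ∈ spectrum ℂ (A.map (fun a => (a : ℂ))), μ.re < 0

lemma spec_eigenvector {n : ℕ} (M : Matrix (Fin n) (Fin n) ℂ) {μ : ℂ}
    (hμ : μ ∈ spectrum ℂ M) : ∃ v : Fin n → ℂ, v ≠ 0 ∧ M *ᵥ v = μ • v := by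
  rw [spectrum.mem_iff] at hμ
  rw [Matrix.isUnit_iff_isUnit_det, isUnit_iff_ne_zero, not_not] at hμ
  rw [← Matrix.exists_mulVec_eq_zero_iff] at hμ
  obtain ⟨v, hv, hv2⟩ := hμ
  refine ⟨v, hv, ?_⟩
  have : (algebraMap ℂ (Matrix (Fin n) (Fin n) ℂ)) μ *ᵥ v = μ • v := by
    simp [Algebra.algebraMap_eq_smul_one, Matrix.smul_mulVec]
  rw [Matrix.sub_mulVec, sub_eq_zero, this] at hv2
  exact hv2.symm

lemma spectrum_transpose {n : ℕ} (M : Matrix (Fin n) (Fin n) ℂ) :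
    spectrum ℂ Mᵀ = spectrum ℂ M := by
  ext μ
  simp only [spectrum.mem_iff, not_iff_not, Matrix.isUnit_iff_isUnit_det]
  have : (algebraMap ℂ (Matrix (Fin n) (Fin n) ℂ)) μ - Mᵀ
      = ((algebraMap ℂ (Matrix (Fin n) (Fin n) ℂ)) μ - M)ᵀ := by
    rw [Matrix.transpose_sub]
    congr 1
    simp [Algebra.algebraMap_eq_smul_one]
  rw [this, Matrix.det_transpose]

/-- Lemma A: a Metzler matrix admitting a strictly positive vector `p` with
`pᵀK ≤ -ξ pᵀ` is Hurwitz. -/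
lemma lemA {n : ℕ} (K : Matrix (Fin n) (Fin n) ℝ) (hK : IsMetzler K)
    (ξ : ℝ) (hξ : 0 < ξ) (p : Fin n → ℝ) (hp : ∀ i, 0 < p i)
    (h : ∀ j, vecMul p K j ≤ -(ξ * p j)) : IsHurwitz K := by
  intro μ hμ
  have hμ' : μ ∈ spectrum ℂ ((Kᵀ).map (fun a => (a:ℂ))) := by
    rw [Matrix.transpose_map, spectrum_transpose]; exact hμ
  obtain ⟨v, hv, hvec⟩ := spec_eigenvector _ hμ'
  obtain ⟨i₀, hvi₀⟩ : ∃ i, v i ≠ 0 := Function.ne_iff.mp hv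
  have hne : (Finset.univ : Finset (Fin n)).Nonempty := ⟨i₀, Finset.mem_univ _⟩
  obtain ⟨j, -, hjmax⟩ := Finset.exists_max_image Finset.univ
    (fun i => ‖v i‖ / p i) hne
  set c : ℝ := ‖v j‖ / p j with hc
  have hcpos : 0 < c := by
    have h1 : ‖v i₀‖ / p i₀ ≤ c := hjmax i₀ (Finset.mem_univ _)
    have : 0 < ‖v i₀‖ / p i₀ :=
      div_pos (by simpa using hvi₀) (hp i₀)
    linarith
  have hbound : ∀ k, ‖v k‖ ≤ c * p k := by
    intro k
    have h1 := hjmax k (Finset.mem_univ _)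
    have h2 := (div_le_iff₀ (hp k)).mp h1
    linarith [h2]
  have hvj : ‖v j‖ = c * p j := by
    rw [hc, div_mul_cancel₀ _ (ne_of_gt (hp j))]
  -- eigen equation at row j
  have heq : ∑ k, (K k j : ℂ) * v k = μ * v j := by
    have h0 := congrFun hvec j
    simpa [Matrix.mulVec, dotProduct, Matrix.map_apply,
      Matrix.transpose_apply, Pi.smul_apply, smul_eq_mul] using h0
  have hsplit : (μ - (K j j : ℂ)) * v j = ∑ k ∈ Finset.univ.erase j, (K k j:ℂ) * v k := by
    have := Finset.add_sum_erase Finset.univ (fun k => (K k j:ℂ) * v k) (Finset.mem_univ j)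
    rw [← this] at heq
    linear_combination -heq
  -- take absolute values
  have habs : ‖μ - (K j j:ℂ)‖ * (c * p j)
      ≤ ∑ k ∈ Finset.univ.erase j, K k j * (c * p k) := by
    rw [← hvj, ← norm_mul, hsplit]
    refine (norm_sum_le _ _).trans ?_
    apply Finset.sum_le_sum
    intro k hk
    have hkj : k ≠ j := Finset.ne_of_mem_erase hk
    have hK0 : 0 ≤ K k j := hK k j hkj
    rw [norm_mul]
    have : ‖((K k j : ℂ))‖ = K k j := by
      rw [Complex.norm_real, Real.norm_eq_abs, abs_of_nonneg hK0]
    rw [this]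
    exact mul_le_mul_of_nonneg_left (hbound k) hK0
  have hsum : ∑ k ∈ Finset.univ.erase j, K k j * (c * p k)
      ≤ c * (-(ξ * p j) - K j j * p j) := by
    have h1 : ∑ k ∈ Finset.univ.erase j, K k j * (c * p k)
        = c * (∑ k ∈ Finset.univ.erase j, K k j * p k) := by
      rw [Finset.mul_sum]; apply Finset.sum_congr rfl; intro k _; ring
    have h2 : ∑ k ∈ Finset.univ.erase j, K k j * p k
        = (∑ k, K k j * p k) - K j j * p j := by
      have h2' := Finset.add_sum_erase Finset.univ (fun k => K k j * p k) (Finset.mem_univ j)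
      linarith [h2']
    have h3 : (∑ k, K k j * p k) = vecMul p K j := by
      simp [Matrix.vecMul, dotProduct, mul_comm]
    rw [h1, h2, h3]
    have := h j
    nlinarith [hcpos]
  have hfinal : ‖μ - (K j j:ℂ)‖ ≤ -ξ - K j j := by
    have hcp : 0 < c * p j := mul_pos hcpos (hp j)
    have := habs.trans hsum
    have h4 : c * (-(ξ * p j) - K j j * p j) = (-ξ - K j j) * (c * p j) := by ring
    rw [h4] at this
    exact le_of_mul_le_mul_right this hcp
  have hre : μ.re - K j j ≤ ‖μ - (K j j:ℂ)‖ := by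
    have := Complex.re_le_norm (μ - (K j j:ℂ))
    simpa using this
  linarith

attribute [local instance] Matrix.linftyOpNormedRing Matrix.linftyOpNormedAlgebra

section Neumann
open Filter
variable {𝕜 α : Type*} [NontriviallyNormedField 𝕜] [NormedRing α]
  [NormedAlgebra 𝕜 α] [CompleteSpace α]

lemma neumann_aux_summable (a : α) (z : 𝕜) (r : ℝ) (hr0 : 0 ≤ r) (hrz : r < ‖z‖)
    (hb : ∀ᶠ k in atTop, ‖a ^ k‖ ≤ r ^ k) (m : ℕ) :
    Summable (fun k : ℕ => (z ^ (k+m))⁻¹ • a ^ k) := by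
  have hz0 : (0:ℝ) < ‖z‖ := lt_of_le_of_lt hr0 hrz
  apply Summable.of_norm_bounded_eventually (g := fun k => (‖z‖^m)⁻¹ * (r / ‖z‖) ^ k)
  · apply Summable.mul_left
    exact summable_geometric_of_lt_one (div_nonneg hr0 hz0.le) ((div_lt_one hz0).2 hrz)
  · rw [Nat.cofinite_eq_atTop]
    filter_upwards [hb] with k hk
    calc ‖(z ^ (k+m))⁻¹ • a ^ k‖ = (‖z‖ ^ (k+m))⁻¹ * ‖a ^ k‖ := by
          rw [norm_smul, norm_inv, norm_pow]
      _ ≤ (‖z‖ ^ (k+m))⁻¹ * r ^ k := by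
          exact mul_le_mul_of_nonneg_left hk (by positivity)
      _ = (‖z‖^m)⁻¹ * (r / ‖z‖) ^ k := by
          rw [div_pow, pow_add, mul_inv, div_eq_mul_inv]
          ring

set_option maxHeartbeats 1000000 in
/-- Neumann series: if eventually `‖a^k‖ ≤ r^k` with `r < ‖z‖`, then `z•1 - a` is a unit
with inverse given by the Neumann series. -/
lemma neumann (a : α) (z : 𝕜) (r : ℝ) (hr0 : 0 ≤ r) (hrz : r < ‖z‖)
    (hb : ∀ᶠ k in atTop, ‖a ^ k‖ ≤ r ^ k) :
    ∃ u : αˣ, (u : α) = z • (1:α) - a ∧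
      (↑u⁻¹ : α) = ∑' k : ℕ, (z ^ (k+1))⁻¹ • a ^ k := by
  have hz0 : (0:ℝ) < ‖z‖ := lt_of_le_of_lt hr0 hrz
  have hz : z ≠ 0 := by simpa using hz0.ne'
  have hS : Summable (fun k : ℕ => (z ^ (k+1))⁻¹ • a ^ k) :=
    neumann_aux_summable a z r hr0 hrz hb 1
  have hg : Summable (fun k : ℕ => (z ^ k)⁻¹ • a ^ k) := by
    simpa using neumann_aux_summable a z r hr0 hrz hb 0
  have hg1 : Summable (fun k : ℕ => (z ^ (k+1))⁻¹ • a ^ (k+1)) :=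
    (summable_nat_add_iff 1).2 hg
  have h2 : ∀ k : ℕ, (z ^ (k+1))⁻¹ * z = (z ^ k)⁻¹ := by
    intro k
    rw [pow_succ, mul_inv, mul_assoc, inv_mul_cancel₀ hz, mul_one]
  have key : ∀ k : ℕ, (z • (1:α) - a) * ((z ^ (k+1))⁻¹ • a ^ k)
      = (z ^ k)⁻¹ • a ^ k - (z ^ (k+1))⁻¹ • a ^ (k+1) := by
    intro k
    have h1 : (z • (1:α) - a) * ((z ^ (k+1))⁻¹ • a ^ k)
        = (z ^ (k+1))⁻¹ • (z • a ^ k - a ^ (k+1)) := by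
      rw [mul_smul_comm, sub_mul, smul_mul_assoc, one_mul, ← pow_succ']
    rw [h1, smul_sub, smul_smul, h2 k]
  have key' : ∀ k : ℕ, ((z ^ (k+1))⁻¹ • a ^ k) * (z • (1:α) - a)
      = (z ^ k)⁻¹ • a ^ k - (z ^ (k+1))⁻¹ • a ^ (k+1) := by
    intro k
    have h1 : ((z ^ (k+1))⁻¹ • a ^ k) * (z • (1:α) - a)
        = (z ^ (k+1))⁻¹ • (z • a ^ k - a ^ (k+1)) := by
      rw [smul_mul_assoc, mul_sub, mul_smul_comm, mul_one, ← pow_succ]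
    rw [h1, smul_sub, smul_smul, h2 k]
  have htel : ∑' k : ℕ, ((z ^ k)⁻¹ • a ^ k - (z ^ (k+1))⁻¹ • a ^ (k+1)) = 1 := by
    rw [Summable.tsum_sub hg hg1, Summable.tsum_eq_zero_add hg]
    simp
  have hmul1 : (z • (1:α) - a) * (∑' k : ℕ, (z ^ (k+1))⁻¹ • a ^ k) = 1 := by
    rw [← Summable.tsum_mul_left (z • (1:α) - a) hS]
    rw [tsum_congr key]
    exact htel
  have hmul2 : (∑' k : ℕ, (z ^ (k+1))⁻¹ • a ^ k) * (z • (1:α) - a) = 1 := by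
    rw [← Summable.tsum_mul_right (z • (1:α) - a) hS]
    rw [tsum_congr key']
    exact htel
  exact ⟨⟨z • (1:α) - a, _, hmul1, hmul2⟩, rfl, rfl⟩

end Neumann


section Helpers
variable {n : ℕ}

/-- evaluation of a matrix entry as a continuous linear map -/
def entryCLM (𝕜 : Type*) [NontriviallyNormedField 𝕜] [CompleteSpace 𝕜] {n : ℕ} (i j : Fin n) :
    Matrix (Fin n) (Fin n) 𝕜 →L[𝕜] 𝕜 :=
  LinearMap.toContinuousLinearMap
    { toFun := fun M => M i j
      map_add' := fun _ _ => rfl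
      map_smul' := fun _ _ => rfl }

lemma entry_tsum {𝕜 : Type*} [NontriviallyNormedField 𝕜] [CompleteSpace 𝕜]
    {f : ℕ → Matrix (Fin n) (Fin n) 𝕜} (hf : Summable f) (i j : Fin n) :
    (∑' k, f k) i j = ∑' k, f k i j := by
  have := (entryCLM 𝕜 i j).map_tsum hf
  exact this

lemma norm_le_of_entry_le {α β : Type*} [NormedRing α] [NormedRing β]
    (X : Matrix (Fin n) (Fin n) α) (Y : Matrix (Fin n) (Fin n) β)
    (h : ∀ i j, ‖X i j‖ ≤ ‖Y i j‖) : ‖X‖ ≤ ‖Y‖ := by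
  rw [Matrix.linfty_opNorm_def, Matrix.linfty_opNorm_def]
  have : ((Finset.univ : Finset (Fin n)).sup fun i => ∑ j, ‖X i j‖₊)
      ≤ (Finset.univ : Finset (Fin n)).sup fun i => ∑ j, ‖Y i j‖₊ := by
    apply Finset.sup_mono_fun
    intro i _
    apply Finset.sum_le_sum
    intro j _
    exact h i j
  exact_mod_cast this

lemma toC_pow (M : Matrix (Fin n) (Fin n) ℝ) (k : ℕ) :
    (M.map (fun a => (a:ℂ)))^k = (M^k).map (fun a => (a:ℂ)) := by
  induction k with
  | zero => simp [Matrix.map_one]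
  | succ k ih =>
    rw [pow_succ, pow_succ, ih]
    ext i j
    simp [Matrix.mul_apply, Matrix.map_apply]

lemma norm_map_complex (M : Matrix (Fin n) (Fin n) ℝ) :
    ‖M.map (fun a => (a:ℂ))‖ = ‖M‖ := by
  rw [Matrix.linfty_opNorm_def, Matrix.linfty_opNorm_def]
  congr 1
  apply Finset.sup_congr rfl
  intro i _
  apply Finset.sum_congr rfl
  intro j _
  simp [Matrix.map_apply]

lemma pow_entry_nonneg {M : Matrix (Fin n) (Fin n) ℝ} (hM : ∀ i j, 0 ≤ M i j) (k : ℕ) :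
    ∀ i j, 0 ≤ (M ^ k) i j := by
  induction k with
  | zero => intro i j; rcases eq_or_ne i j with h|h <;> simp [pow_zero, Matrix.one_apply, h]
  | succ k ih =>
    intro i j
    rw [pow_succ, Matrix.mul_apply]
    exact Finset.sum_nonneg fun l _ => mul_nonneg (ih i l) (hM l j)

end Helpers

section Gelfand

lemma gelfand_bound {n : ℕ} (M : Matrix (Fin n) (Fin n) ℂ) (ρ : ℝ) (hρ0 : 0 ≤ ρ)
    (hρ : spectralRadius ℂ M = ENNReal.ofReal ρ) {r : ℝ} (hr : ρ < r) :
    ∀ᶠ k in atTop, ‖M ^ k‖ ≤ r ^ k := by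
  have hrpos : 0 < r := lt_of_le_of_lt hρ0 hr
  have h := spectrum.pow_norm_pow_one_div_tendsto_nhds_spectralRadius M
  rw [hρ] at h
  have hlt : ENNReal.ofReal ρ < ENNReal.ofReal r :=
    (ENNReal.ofReal_lt_ofReal_iff hrpos).2 hr
  have hev := h.eventually_lt_const hlt
  filter_upwards [hev, eventually_ge_atTop 1] with k hk hk1
  have hk0 : (k:ℝ) ≠ 0 := by positivity
  have h1 : ‖M ^ k‖ ^ (1/(k:ℝ)) < r := by
    have := (ENNReal.ofReal_lt_ofReal_iff hrpos).1 hk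
    exact this
  have hx0 : (0:ℝ) ≤ ‖M ^ k‖ := norm_nonneg _
  have h2 : (‖M ^ k‖ ^ (1/(k:ℝ))) ^ (k:ℝ) < r ^ (k:ℝ) := by
    apply Real.rpow_lt_rpow (Real.rpow_nonneg hx0 _) h1
    positivity
  rw [← Real.rpow_mul hx0, one_div, inv_mul_cancel₀ hk0, Real.rpow_one,
    Real.rpow_natCast] at h2
  exact h2.le

end Gelfand

section Perron
open Filter

set_option maxHeartbeats 1600000 in
/-- Perron-Frobenius-type statement: for an entrywise nonnegative real matrix, the spectral
radius is itself a (complex) spectrum point, and it controls the growth of powers. -/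
lemma perron {n : ℕ} [NeZero n] (N : Matrix (Fin n) (Fin n) ℝ) (hN : ∀ i j, 0 ≤ N i j) :
    ∃ ρ : ℝ, 0 ≤ ρ ∧ (ρ : ℂ) ∈ spectrum ℂ (N.map (fun a => (a:ℂ))) ∧
      ∀ r : ℝ, ρ < r → ∀ᶠ k in atTop, ‖N ^ k‖ ≤ r ^ k := by
  set N' := N.map (fun a => (a:ℂ)) with hN'def
  obtain ⟨lam, hlmem, hlrad⟩ :=
    spectrum.exists_nnnorm_eq_spectralRadius_of_nonempty (spectrum.nonempty N')
  set ρ := ‖lam‖ with hρdef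
  have hρ0 : (0:ℝ) ≤ ρ := norm_nonneg _
  have hrad : spectralRadius ℂ N' = ENNReal.ofReal ρ := by
    rw [← hlrad, hρdef]; exact (ofReal_norm lam).symm
  have hgelC : ∀ r : ℝ, ρ < r → ∀ᶠ k in atTop, ‖N' ^ k‖ ≤ r ^ k :=
    fun r hr => gelfand_bound N' ρ hρ0 hrad hr
  have hgel : ∀ r : ℝ, ρ < r → ∀ᶠ k in atTop, ‖N ^ k‖ ≤ r ^ k := by
    intro r hr
    filter_upwards [hgelC r hr] with k hk
    rwa [hN'def, toC_pow, norm_map_complex] at hk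
  refine ⟨ρ, hρ0, ?_, hgel⟩
  by_contra hρσ
  have hρpos : 0 < ρ := by
    rcases hρ0.lt_or_eq with h | h
    · exact h
    · exfalso
      apply hρσ
      have hlam0 : lam = 0 := norm_eq_zero.1 h.symm
      have hcast : ((ρ:ℝ):ℂ) = lam := by rw [hlam0, ← h]; norm_num
      rw [hcast]
      exact hlmem
  have hρne : ρ ≠ 0 := hρpos.ne'
  -- ρ ∉ spectrum, so resolvent is continuous near ρ
  have hUnit : IsUnit ((ρ:ℂ) • (1 : Matrix (Fin n) (Fin n) ℂ) - N') := by
    rw [spectrum.notMem_iff] at hρσ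
    rwa [Algebra.algebraMap_eq_smul_one] at hρσ
  obtain ⟨u₀, hu₀⟩ := hUnit
  have hVcont : Continuous (fun t : ℝ => (t:ℂ) • (1 : Matrix (Fin n) (Fin n) ℂ) - N') :=
    (Complex.continuous_ofReal.smul continuous_const).sub continuous_const
  have hcont : ContinuousAt
      (fun t : ℝ => Ring.inverse ((t:ℂ) • (1 : Matrix (Fin n) (Fin n) ℂ) - N')) ρ := by
    apply ContinuousAt.comp (g := Ring.inverse) ?_ hVcont.continuousAt
    rw [show ((ρ:ℂ) • (1 : Matrix (Fin n) (Fin n) ℂ) - N')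
      = (u₀ : Matrix (Fin n) (Fin n) ℂ) from hu₀.symm]
    exact NormedRing.inverse_continuousAt u₀
  set Q := Ring.inverse ((ρ:ℂ) • (1 : Matrix (Fin n) (Fin n) ℂ) - N') with hQ
  set C := ‖Q‖ + 1 with hCdef
  have hCpos : 0 < C := by positivity
  replace hcont := Metric.continuousAt_iff.1 hcont
  obtain ⟨δ, hδ0, hδ⟩ := hcont 1 one_pos
  set ε := min (δ/2) (1/(2*C)) with hεdef
  have hε0 : 0 < ε := lt_min (by linarith) (by positivity)
  have hεC : ε * C ≤ 1/2 := by
    have h1 : ε ≤ 1/(2*C) := min_le_right _ _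
    have := mul_le_mul_of_nonneg_right h1 hCpos.le
    calc ε * C ≤ 1/(2*C) * C := this
      _ = 1/2 := by field_simp
  set t := ρ + ε with htdef
  have htρ : ρ < t := by rw [htdef]; linarith
  have htpos : 0 < t := lt_of_le_of_lt hρ0 htρ
  have hdist : dist t ρ < δ := by
    rw [Real.dist_eq, htdef, add_sub_cancel_left, abs_of_pos hε0]
    have := min_le_left (δ/2) (1/(2*C))
    rw [← hεdef] at this
    linarith
  have hCb : ‖Ring.inverse ((t:ℂ) • (1 : Matrix (Fin n) (Fin n) ℂ) - N')‖ ≤ C := by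
    have h3 := hδ hdist
    rw [dist_eq_norm] at h3
    set x := Ring.inverse ((t:ℂ) • (1 : Matrix (Fin n) (Fin n) ℂ) - N')
    have h4 : ‖x‖ ≤ ‖Q‖ + ‖x - Q‖ := by
      have := norm_add_le Q (x - Q)
      simpa using this
    rw [hCdef]
    linarith
  -- Neumann series at the complex points t and z
  set r := (ρ + t)/2 with hrdef
  have hρr : ρ < r := by rw [hrdef]; linarith
  have hrt : r < t := by rw [hrdef]; linarith
  have hr0 : (0:ℝ) ≤ r := by positivity
  have hbC : ∀ᶠ k in atTop, ‖N' ^ k‖ ≤ r ^ k := hgelC r hρr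
  have hnormtC : ‖((t:ℝ):ℂ)‖ = t := by
    rw [Complex.norm_real, Real.norm_eq_abs, abs_of_pos htpos]
  obtain ⟨ut, hut, hutinv⟩ := neumann N' ((t:ℝ):ℂ) r hr0 (by rw [hnormtC]; exact hrt) hbC
  set z : ℂ := ((t/ρ : ℝ):ℂ) * lam with hzdef
  have hznorm : ‖z‖ = t := by
    rw [hzdef, norm_mul, Complex.norm_real, Real.norm_eq_abs,
      abs_of_pos (div_pos htpos hρpos), ← hρdef]
    field_simp
  obtain ⟨uz, huz, huzinv⟩ := neumann N' z r hr0 (by rw [hznorm]; exact hrt) hbC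
  -- entrywise domination of the two Neumann series
  have hsumz : Summable (fun k : ℕ => (z ^ (k+1))⁻¹ • N' ^ k) :=
    neumann_aux_summable N' z r hr0 (by rw [hznorm]; exact hrt) hbC 1
  have hsumt : Summable (fun k : ℕ => (((t:ℝ):ℂ) ^ (k+1))⁻¹ • N' ^ k) :=
    neumann_aux_summable N' ((t:ℝ):ℂ) r hr0 (by rw [hnormtC]; exact hrt) hbC 1
  have hentry : ∀ i j, ‖(↑uz⁻¹ : Matrix (Fin n) (Fin n) ℂ) i j‖
      ≤ ‖(↑ut⁻¹ : Matrix (Fin n) (Fin n) ℂ) i j‖ := by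
    intro i j
    rw [huzinv, hutinv]; erw [entry_tsum hsumz i j, entry_tsum hsumt i j]
    set φ : ℕ → ℝ := fun k => (t ^ (k+1))⁻¹ * ((N ^ k) i j) with hφdef
    have hφ0 : ∀ k, 0 ≤ φ k := by
      intro k
      exact mul_nonneg (by positivity) (pow_entry_nonneg hN k i j)
    have hNk : ∀ k : ℕ, (N' ^ k) i j = (((N ^ k) i j : ℝ) : ℂ) := by
      intro k
      rw [hN'def, toC_pow]
      rfl
    have htermt : ∀ k : ℕ, ((((t:ℝ):ℂ) ^ (k+1))⁻¹ • N' ^ k) i j = ((φ k : ℝ) : ℂ) := by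
      intro k
      rw [Matrix.smul_apply, hNk, smul_eq_mul, hφdef]
      push_cast
      ring
    have hφsum : Summable φ := by
      have h5 : Summable (fun k => ((φ k : ℝ) : ℂ)) := by
        rw [show (fun k => ((φ k : ℝ):ℂ)) = fun k => ((((t:ℝ):ℂ) ^ (k+1))⁻¹ • N' ^ k) i j from
          funext fun k => (htermt k).symm]
        exact hsumt.map (entryCLM ℂ i j).toLinearMap.toAddMonoidHom (entryCLM ℂ i j).continuous
      exact Complex.summable_ofReal.1 h5
    have hnormz : ∀ k : ℕ, ‖((z ^ (k+1))⁻¹ • N' ^ k) i j‖ = φ k := by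
      intro k
      rw [Matrix.smul_apply, hNk, smul_eq_mul, norm_mul, norm_inv, norm_pow, hznorm,
        Complex.norm_real, Real.norm_eq_abs, abs_of_nonneg (pow_entry_nonneg hN k i j), hφdef]
    calc ‖∑' k, ((z ^ (k+1))⁻¹ • N' ^ k) i j‖
        ≤ ∑' k, ‖((z ^ (k+1))⁻¹ • N' ^ k) i j‖ := by
          apply norm_tsum_le_tsum_norm
          rw [show (fun k => ‖((z ^ (k+1))⁻¹ • N' ^ k) i j‖) = φ from funext hnormz]
          exact hφsum
      _ = ∑' k, φ k := by rw [tsum_congr hnormz]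
      _ = ‖((∑' k, φ k : ℝ) : ℂ)‖ := by
          rw [Complex.norm_real, Real.norm_eq_abs, abs_of_nonneg (tsum_nonneg hφ0)]
      _ = ‖∑' k, ((((t:ℝ):ℂ) ^ (k+1))⁻¹ • N' ^ k) i j‖ := by
          congr 1
          rw [tsum_congr htermt]
          have h6 := Complex.ofRealCLM.map_tsum hφsum
          simpa using h6
  -- norm bounds on the resolvents
  have h8 : Ring.inverse ((t:ℂ) • (1 : Matrix (Fin n) (Fin n) ℂ) - N') = ↑ut⁻¹ := by
    rw [← hut, Ring.inverse_unit]
  have hSz_le : ‖(↑uz⁻¹ : Matrix (Fin n) (Fin n) ℂ)‖ ≤ C := by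
    have h7 : ‖(↑uz⁻¹ : Matrix (Fin n) (Fin n) ℂ)‖ ≤ ‖(↑ut⁻¹ : Matrix (Fin n) (Fin n) ℂ)‖ :=
      norm_le_of_entry_le _ _ hentry
    have h9 : ‖(↑ut⁻¹ : Matrix (Fin n) (Fin n) ℂ)‖ ≤ C := by rw [← h8]; exact hCb
    exact h7.trans h9
  have hzlam : ‖z - lam‖ = ε := by
    have h10 : z - lam = (((t - ρ)/ρ : ℝ) : ℂ) * lam := by
      rw [hzdef]
      have h10a : ((t - ρ)/ρ : ℝ) = (t/ρ : ℝ) - 1 := by field_simp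
      rw [h10a]
      push_cast
      ring
    have h10b : (0:ℝ) ≤ (t - ρ)/ρ := div_nonneg (by linarith) hρ0
    rw [h10, norm_mul, Complex.norm_real, Real.norm_eq_abs, ← hρdef, abs_of_nonneg h10b]
    calc ((t - ρ)/ρ) * ρ = t - ρ := by field_simp
      _ = ε := by rw [htdef]; ring
  have hsmall : ‖(z - lam) • (↑uz⁻¹ : Matrix (Fin n) (Fin n) ℂ)‖ < 1 := by
    rw [norm_smul, hzlam]
    calc ε * ‖(↑uz⁻¹ : Matrix (Fin n) (Fin n) ℂ)‖ ≤ ε * C :=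
          mul_le_mul_of_nonneg_left hSz_le hε0.le
      _ ≤ 1/2 := hεC
      _ < 1 := by norm_num
  have hid : lam • (1 : Matrix (Fin n) (Fin n) ℂ) - N'
      = (↑uz : Matrix (Fin n) (Fin n) ℂ)
        * ((1 : Matrix (Fin n) (Fin n) ℂ) - (z - lam) • (↑uz⁻¹ : Matrix (Fin n) (Fin n) ℂ)) := by
    have h11 : (↑uz : Matrix (Fin n) (Fin n) ℂ) * ((z - lam) • (↑uz⁻¹ : Matrix (Fin n) (Fin n) ℂ))
        = (z - lam) • (1 : Matrix (Fin n) (Fin n) ℂ) := by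
      rw [mul_smul_comm, Units.mul_inv]
    rw [mul_sub, mul_one, h11, huz, sub_smul]
    abel
  have hunit : IsUnit (lam • (1 : Matrix (Fin n) (Fin n) ℂ) - N') := by
    rw [hid]
    exact uz.isUnit.mul (Units.oneSub _ hsmall).isUnit
  rw [spectrum.mem_iff] at hlmem
  apply hlmem
  rwa [Algebra.algebraMap_eq_smul_one]

end Perron

section LemB
open Filter

set_option maxHeartbeats 1000000 in
/-- Lemma B: a Hurwitz Metzler matrix admits a strictly positive vector `p` with
`pᵀK ≤ -ξ pᵀ`. -/
lemma lemB {n : ℕ} (K : Matrix (Fin n) (Fin n) ℝ) (hK : IsMetzler K) (hH : IsHurwitz K) :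
    ∃ ξ : ℝ, 0 < ξ ∧ ∃ p : Fin n → ℝ, (∀ i, 0 < p i) ∧ ∀ j, vecMul p K j ≤ -(ξ * p j) := by
  rcases Nat.eq_zero_or_pos n with h0 | hn
  · subst h0
    exact ⟨1, one_pos, (fun _ => 1), (fun i => i.elim0), (fun j => j.elim0)⟩
  haveI : NeZero n := ⟨hn.ne'⟩
  set s : ℝ := 1 + ∑ i, |K i i| with hsdef
  have habs : (0:ℝ) ≤ ∑ i, |K i i| := Finset.sum_nonneg fun i _ => abs_nonneg _
  have hs_pos : 0 < s := by rw [hsdef]; linarith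
  have hs_diag : ∀ i, 0 ≤ K i i + s := by
    intro i
    have h1 : |K i i| ≤ ∑ l, |K l l| :=
      Finset.single_le_sum (fun l _ => abs_nonneg (K l l)) (Finset.mem_univ i)
    have h2 : -K i i ≤ |K i i| := neg_le_abs _
    rw [hsdef]; linarith
  set N : Matrix (Fin n) (Fin n) ℝ := K + s • (1 : Matrix (Fin n) (Fin n) ℝ) with hNdef
  have hN : ∀ i j, 0 ≤ N i j := by
    intro i j
    rcases eq_or_ne i j with h | h
    · subst h
      have hNe : N i i = K i i + s := by
        simp [hNdef, Matrix.add_apply, Matrix.smul_apply, Matrix.one_apply]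
      rw [hNe]; exact hs_diag i
    · have hNe : N i j = K i j := by
        simp [hNdef, Matrix.add_apply, Matrix.smul_apply, Matrix.one_apply, h]
      rw [hNe]; exact hK i j h
  obtain ⟨ρ, hρ0, hρmem, hgel⟩ := perron N hN
  -- ρ - s is a spectrum point of K, hence ρ < s since K is Hurwitz
  have hshift : ((ρ - s : ℝ) : ℂ) ∈ spectrum ℂ (K.map (fun a => (a:ℂ))) := by
    rw [spectrum.mem_iff] at hρmem ⊢
    intro hcontra
    apply hρmem
    have hEq : (algebraMap ℂ (Matrix (Fin n) (Fin n) ℂ)) ((ρ:ℝ):ℂ) - N.map (fun a => (a:ℂ))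
        = (algebraMap ℂ (Matrix (Fin n) (Fin n) ℂ)) (((ρ - s : ℝ)):ℂ) - K.map (fun a => (a:ℂ)) := by
      ext i j
      rcases eq_or_ne i j with h | h
      · subst h
        simp [Algebra.algebraMap_eq_smul_one, hNdef, Matrix.map_apply, Matrix.one_apply,
          Matrix.add_apply, Matrix.smul_apply, Matrix.sub_apply]
        ring
      · simp [Algebra.algebraMap_eq_smul_one, hNdef, Matrix.map_apply, Matrix.one_apply,
          Matrix.add_apply, Matrix.smul_apply, Matrix.sub_apply, h]
    rw [hEq]
    exact hcontra
  have hρs : ρ < s := by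
    have hre := hH _ hshift
    have : ((((ρ - s : ℝ)):ℂ)).re = ρ - s := by simp
    rw [this] at hre
    linarith
  -- invert s•1 - N = -K by the real Neumann series
  set r : ℝ := (ρ + s)/2 with hrdef
  have hρr : ρ < r := by rw [hrdef]; linarith
  have hrs : r < s := by rw [hrdef]; linarith
  have hr0 : (0:ℝ) ≤ r := by rw [hrdef]; linarith
  have hnorms : ‖s‖ = s := Real.norm_of_nonneg hs_pos.le
  obtain ⟨u, hu, huinv⟩ := neumann N s r hr0 (by rw [hnorms]; exact hrs) (hgel r hρr)
  have hTsum : Summable (fun k : ℕ => (s ^ (k+1))⁻¹ • N ^ k) :=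
    neumann_aux_summable N s r hr0 (by rw [hnorms]; exact hrs) (hgel r hρr) 1
  have huK : (↑u : Matrix (Fin n) (Fin n) ℝ) = -K := by
    rw [hu, hNdef]
    abel
  have hT0 : ∀ i j, 0 ≤ (↑u⁻¹ : Matrix (Fin n) (Fin n) ℝ) i j := by
    intro i j
    rw [huinv]; erw [entry_tsum hTsum i j]
    apply tsum_nonneg
    intro k
    rw [Matrix.smul_apply, smul_eq_mul]
    exact mul_nonneg (by positivity) (pow_entry_nonneg hN k i j)
  have hmulK : (↑u⁻¹ : Matrix (Fin n) (Fin n) ℝ) * K = -(1 : Matrix (Fin n) (Fin n) ℝ) := by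
    have h1 := u.inv_mul
    rw [huK, Matrix.mul_neg] at h1
    rw [← neg_neg ((↑u⁻¹ : Matrix (Fin n) (Fin n) ℝ) * K), h1]
  set p : Fin n → ℝ := fun j => ∑ i, (↑u⁻¹ : Matrix (Fin n) (Fin n) ℝ) i j with hpdef
  have hvec : ∀ j, vecMul p K j = -1 := by
    intro j
    have h1 : vecMul p K j = ∑ i, (∑ l, (↑u⁻¹ : Matrix (Fin n) (Fin n) ℝ) l i) * K i j := by
      simp [Matrix.vecMul, dotProduct, hpdef]
    rw [h1]
    calc ∑ i, (∑ l, (↑u⁻¹ : Matrix (Fin n) (Fin n) ℝ) l i) * K i j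
        = ∑ i, ∑ l, (↑u⁻¹ : Matrix (Fin n) (Fin n) ℝ) l i * K i j := by
          apply Finset.sum_congr rfl; intros; rw [Finset.sum_mul]
      _ = ∑ l, ∑ i, (↑u⁻¹ : Matrix (Fin n) (Fin n) ℝ) l i * K i j := Finset.sum_comm
      _ = ∑ l, ((↑u⁻¹ : Matrix (Fin n) (Fin n) ℝ) * K) l j := by
          apply Finset.sum_congr rfl; intros; rw [Matrix.mul_apply]
      _ = ∑ l, -((1 : Matrix (Fin n) (Fin n) ℝ) l j) := by
          rw [hmulK]; apply Finset.sum_congr rfl; intros; rw [Matrix.neg_apply]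
      _ = -1 := by simp [Matrix.one_apply]
  have hp0 : ∀ j, 0 ≤ p j := fun j => Finset.sum_nonneg fun i _ => hT0 i j
  have hppos : ∀ j, 0 < p j := by
    intro j
    rcases (hp0 j).lt_or_eq with h | h
    · exact h
    · exfalso
      have hz : ∀ i, (↑u⁻¹ : Matrix (Fin n) (Fin n) ℝ) i j = 0 := by
        have hzz := (Finset.sum_eq_zero_iff_of_nonneg (fun i _ => hT0 i j)).1 h.symm
        intro i; exact hzz i (Finset.mem_univ i)
      have h1 : ((↑u : Matrix (Fin n) (Fin n) ℝ) * (↑u⁻¹ : Matrix (Fin n) (Fin n) ℝ)) j j = 1 := by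
        rw [Units.mul_inv]; simp [Matrix.one_apply]
      rw [Matrix.mul_apply] at h1
      have hzero : ∀ l ∈ Finset.univ, (↑u : Matrix (Fin n) (Fin n) ℝ) j l
          * (↑u⁻¹ : Matrix (Fin n) (Fin n) ℝ) l j = 0 := by
        intro l _; rw [hz l, mul_zero]
      rw [Finset.sum_eq_zero hzero] at h1
      norm_num at h1
  have hsum_p : (0:ℝ) ≤ ∑ j, p j := Finset.sum_nonneg fun j _ => hp0 j
  refine ⟨1/(1 + ∑ j, p j), by positivity, p, hppos, ?_⟩
  intro j
  rw [hvec j]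
  have hpj : p j ≤ ∑ l, p l := Finset.single_le_sum (fun l _ => hp0 l) (Finset.mem_univ j)
  have hle1 : 1/(1 + ∑ l, p l) * p j ≤ 1 := by
    rw [div_mul_eq_mul_div, one_mul, div_le_one (by linarith)]
    linarith
  linarith

end LemB

section Main

lemma vecMul_apply' {n : ℕ} (p : Fin n → ℝ) (M : Matrix (Fin n) (Fin n) ℝ) (j : Fin n) :
    vecMul p M j = ∑ i, p i * M i j := by
  simp [Matrix.vecMul, dotProduct]

/-- hypothesis (H1) is equivalent to `A + B₁ Σ C₁` being Hurwitz for every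
`0 ≤ Σ ≤ Δ`. -/
theorem stmt3 {n m₁ p₁ : ℕ}
    (A : Matrix (Fin n) (Fin n) ℝ) (B₁ : Matrix (Fin n) (Fin m₁) ℝ)
    (C₁ : Matrix (Fin p₁) (Fin n) ℝ)
    (hA : IsMetzler A) (hB₁ : ∀ i j, 0 ≤ B₁ i j) (hC₁ : ∀ i j, 0 ≤ C₁ i j)
    (Δ : Matrix (Fin m₁) (Fin p₁) ℝ) (hΔ : ∀ i j, 0 ≤ Δ i j) :
    (∃ ξ : ℝ, 0 < ξ ∧ ∃ p : Fin n → ℝ, (∀ i, 0 < p i) ∧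
        ∀ j, vecMul p (A + B₁ * Δ * C₁) j ≤ -(ξ * p j)) ↔
    (∀ Sig : Matrix (Fin m₁) (Fin p₁) ℝ,
        (∀ i j, 0 ≤ Sig i j ∧ Sig i j ≤ Δ i j) → IsHurwitz (A + B₁ * Sig * C₁)) := by
  have hMetz : ∀ (Sig : Matrix (Fin m₁) (Fin p₁) ℝ), (∀ i j, 0 ≤ Sig i j) →
      IsMetzler (A + B₁ * Sig * C₁) := by
    intro Sig hSig i j hij
    have h1 : 0 ≤ (B₁ * Sig * C₁) i j := by
      rw [Matrix.mul_apply]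
      apply Finset.sum_nonneg; intro b _
      apply mul_nonneg _ (hC₁ b j)
      rw [Matrix.mul_apply]
      apply Finset.sum_nonneg; intro a _
      exact mul_nonneg (hB₁ i a) (hSig a b)
    have h2 := hA i j hij
    rw [Matrix.add_apply]
    linarith
  constructor
  · rintro ⟨ξ, hξ, p, hp, hle⟩ Sig hSig
    apply lemA _ (hMetz Sig (fun i j => (hSig i j).1)) ξ hξ p hp
    intro j
    refine le_trans ?_ (hle j)
    rw [vecMul_apply', vecMul_apply']
    apply Finset.sum_le_sum
    intro i _
    apply mul_le_mul_of_nonneg_left _ (hp i).le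
    rw [Matrix.add_apply, Matrix.add_apply]
    have h3 : (B₁ * Sig * C₁) i j ≤ (B₁ * Δ * C₁) i j := by
      rw [Matrix.mul_apply, Matrix.mul_apply]
      apply Finset.sum_le_sum; intro b _
      apply mul_le_mul_of_nonneg_right _ (hC₁ b j)
      rw [Matrix.mul_apply, Matrix.mul_apply]
      apply Finset.sum_le_sum; intro a _
      exact mul_le_mul_of_nonneg_left (hSig a b).2 (hB₁ i a)
    linarith
  · intro h
    exact lemB _ (hMetz Δ hΔ) (h Δ (fun i j => ⟨hΔ i j, le_refl _⟩))

end Main
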